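/- Let E be a real inner product space, x₀ ∈ E, and r > 0. Then the closed ball B = { x ∈ E : ‖x − x₀‖ ≤ r } is (1/(2r))-strongly convex: for all x, y ∈ B, all t ∈ [0,1], and all z ∈ E with ‖z‖ = 1, the point (1−t)x + t y + (1/(2r)) t(1−t)‖x−y‖² z belongs to B. -/
import Mathlib


open RealInnerProductSpace

/-- In a real inner product space, the closed ball of radius `r > 0` around
`x₀` is `(1/(2r))`-strongly convex. -/
theorem closedBall_strongly_convex {E : Type*}
    [NormedAddCommGroup E] [InnerProductSpace ℝ E]
    (x₀ : E) (r : ℝ) (hr : 0 < r) :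
    ∀ x ∈ {u : E | ‖u - x₀‖ ≤ r}, ∀ y ∈ {u : E | ‖u - x₀‖ ≤ r},
      ∀ t ∈ Set.Icc (0 : ℝ) 1, ∀ z : E, ‖z‖ = 1 →
        (1 - t) • x + t • y + (1 / (2 * r) * t * (1 - t) * ‖x - y‖ ^ 2) • z ∈
          {u : E | ‖u - x₀‖ ≤ r} := by
  intro x hx y hy t ht z hz
  simp only [Set.mem_setOf_eq] at hx hy ⊢
  obtain ⟨ht0, ht1⟩ := ht
  have ht1' : (0:ℝ) ≤ 1 - t := by linarith
  set d : ℝ := t * (1 - t) * ‖x - y‖ ^ 2 with hd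
  have hd0 : 0 ≤ d := by rw [hd]; positivity
  -- general identity
  have key_id : ∀ a b : E, ‖(1 - t) • a + t • b‖ ^ 2
      = (1 - t) * ‖a‖ ^ 2 + t * ‖b‖ ^ 2 - t * (1 - t) * ‖a - b‖ ^ 2 := by
    intro a b
    rw [norm_add_sq_real, norm_sub_sq_real, norm_smul, norm_smul,
      real_inner_smul_left, real_inner_smul_right, Real.norm_eq_abs,
      Real.norm_eq_abs, abs_of_nonneg ht1', abs_of_nonneg ht0]
    ring
  have hm : (1 - t) • x + t • y - x₀ = (1 - t) • (x - x₀) + t • (y - x₀) := by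
    rw [smul_sub, smul_sub]
    have h1 : (1 - t) • x₀ + t • x₀ = x₀ := by rw [← add_smul]; simp
    calc (1 - t) • x + t • y - x₀ = (1 - t) • x + t • y - ((1 - t) • x₀ + t • x₀) := by
          rw [h1]
      _ = (1 - t) • x - (1 - t) • x₀ + (t • y - t • x₀) := by abel
  have hab : (x - x₀) - (y - x₀) = x - y := by abel
  have key : ‖(1 - t) • x + t • y - x₀‖ ^ 2
      = (1 - t) * ‖x - x₀‖ ^ 2 + t * ‖y - x₀‖ ^ 2 - d := by
    rw [hm, key_id, hab, hd]
  have hxy : ‖x - y‖ ≤ 2 * r := by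
    calc ‖x - y‖ = ‖(x - x₀) - (y - x₀)‖ := by rw [hab]
    _ ≤ ‖x - x₀‖ + ‖y - x₀‖ := norm_sub_le _ _
    _ ≤ 2 * r := by linarith
  have hdr : d ≤ r ^ 2 := by
    have h1 : t * (1 - t) ≤ 1 / 4 := by nlinarith [sq_nonneg (2 * t - 1)]
    have h2 : ‖x - y‖ ^ 2 ≤ (2 * r) ^ 2 := by
      nlinarith [norm_nonneg (x - y)]
    rw [hd]
    nlinarith [sq_nonneg ‖x - y‖]
  have hmle : ‖(1 - t) • x + t • y - x₀‖ ^ 2 ≤ r ^ 2 - d := by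
    rw [key]
    have hA : ‖x - x₀‖ ^ 2 ≤ r ^ 2 := by nlinarith [norm_nonneg (x - x₀)]
    have hB : ‖y - x₀‖ ^ 2 ≤ r ^ 2 := by nlinarith [norm_nonneg (y - x₀)]
    nlinarith
  have hs : ‖(1 - t) • x + t • y - x₀‖ ≤ r - d / (2 * r) := by
    have hs0 : 0 ≤ r - d / (2 * r) := by
      rw [sub_nonneg, div_le_iff₀ (by linarith)]
      nlinarith
    have hsq : ‖(1 - t) • x + t • y - x₀‖ ^ 2 ≤ (r - d / (2 * r)) ^ 2 := by
      have h3 : (r - d / (2 * r)) ^ 2 = r ^ 2 - d + (d / (2 * r)) ^ 2 := by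
        field_simp; ring
      rw [h3]
      nlinarith [sq_nonneg (d / (2 * r))]
    exact (pow_le_pow_iff_left₀ (norm_nonneg _) hs0 two_ne_zero).mp hsq
  have hc : 1 / (2 * r) * t * (1 - t) * ‖x - y‖ ^ 2 = d / (2 * r) := by
    rw [hd]; ring
  calc ‖(1 - t) • x + t • y + (1 / (2 * r) * t * (1 - t) * ‖x - y‖ ^ 2) • z - x₀‖
      = ‖((1 - t) • x + t • y - x₀) + (d / (2 * r)) • z‖ := by rw [hc]; congr 1; abel
    _ ≤ ‖(1 - t) • x + t • y - x₀‖ + ‖(d / (2 * r)) • z‖ := norm_add_le _ _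
    _ = ‖(1 - t) • x + t • y - x₀‖ + d / (2 * r) := by
        rw [norm_smul, hz, Real.norm_eq_abs, abs_of_nonneg (by positivity), mul_one]
    _ ≤ r := by linarith
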